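/- Let M be a d×d matrix measure with L²(M) ≠ {0} and F : Ω → ℂ measurable. Then the spectrum of the multiplication operator T_F on L²(M) equals the essential value set of F with respect to the trace measure: σ(T_F) = VE_{tr_M}(F), and the point spectrum is σ_p(T_F) = { λ ∈ ℂ : tr_M(F⁻¹({λ})) ≠ 0 }. Moreover, T_F is bounded iff VE_{tr_M}(F) is bounded, in which case ‖T_F‖ = sup{ |λ| : λ ∈ VE_{tr_M}(F) }. -/

import Mathlib

open MeasureTheory Matrix
open scoped ComplexOrder

/-- The squared `L²(M)`-seminorm of a `ℂ^d`-valued function, for a matrix measure with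
trace measure `μ` and trace density `D`. -/
noncomputable def quadInt {Ω : Type*} [MeasurableSpace Ω] {d : ℕ}
    (μ : MeasureTheory.Measure Ω) (D : Ω → Matrix (Fin d) (Fin d) ℂ)
    (f : Ω → Fin d → ℂ) : ℝ :=
  ∫ t, (star (f t) ⬝ᵥ ((D t) *ᵥ f t)).re ∂μ

/-- Membership in `𝓛²(M)`: measurable with finite quadratic integral. -/
def MemL2M {Ω : Type*} [MeasurableSpace Ω] {d : ℕ}
    (μ : MeasureTheory.Measure Ω) (D : Ω → Matrix (Fin d) (Fin d) ℂ)
    (f : Ω → Fin d → ℂ) : Prop :=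
  Measurable f ∧ MeasureTheory.Integrable (fun t => (star (f t) ⬝ᵥ ((D t) *ᵥ f t)).re) μ

/-- The essential value set `VE_μ(F)`: the complement of the union of all open `U ⊆ ℂ`
with `μ (F⁻¹ U) = 0`. -/
def essValueSet {Ω : Type*} [MeasurableSpace Ω]
    (μ : MeasureTheory.Measure Ω) (F : Ω → ℂ) : Set ℂ :=
  {z : ℂ | ∀ U : Set ℂ, IsOpen U → z ∈ U → μ (F ⁻¹' U) ≠ 0}

set_option linter.unusedSectionVars false
set_option linter.unusedVariables false
set_option maxHeartbeats 1000000

open Set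

namespace SpecMul

variable {Ω : Type*} [MeasurableSpace Ω] {d : ℕ}
variable {D : Ω → Matrix (Fin d) (Fin d) ℂ}

variable {Ω : Type*} [MeasurableSpace Ω] {d : ℕ}
variable {D : Ω → Matrix (Fin d) (Fin d) ℂ}

/-- pointwise quadratic form -/
noncomputable def qd (D : Ω → Matrix (Fin d) (Fin d) ℂ) (t : Ω) (x : Fin d → ℂ) : ℝ :=
  (star x ⬝ᵥ ((D t) *ᵥ x)).re

lemma qd_nonneg (hDpos : ∀ t, (D t).PosSemidef) (t : Ω) (x : Fin d → ℂ) : 0 ≤ qd D t x :=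
  (Complex.le_def.mp ((hDpos t).dotProduct_mulVec_nonneg x)).1

lemma qd_smul (t : Ω) (c : ℂ) (x : Fin d → ℂ) :
    qd D t (c • x) = Complex.normSq c * qd D t x := by
  unfold qd
  have : star (c • x) ⬝ᵥ ((D t) *ᵥ (c • x))
      = ((Complex.normSq c : ℝ) : ℂ) * (star x ⬝ᵥ ((D t) *ᵥ x)) := by
    rw [star_smul, Matrix.mulVec_smul, smul_dotProduct, dotProduct_smul]
    simp only [smul_eq_mul, star_trivial, Complex.star_def]
    rw [Complex.normSq_eq_conj_mul_self]
    ring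
  rw [this, Complex.re_ofReal_mul]

lemma qd_zero (t : Ω) : qd D t (0 : Fin d → ℂ) = 0 := by
  simp [qd]

lemma qd_add_le (hDpos : ∀ t, (D t).PosSemidef) (t : Ω) (x y : Fin d → ℂ) :
    qd D t (x + y) ≤ 2 * qd D t x + 2 * qd D t y := by
  have key : star (x + y) ⬝ᵥ ((D t) *ᵥ (x + y)) + star (x - y) ⬝ᵥ ((D t) *ᵥ (x - y))
      = 2 * (star x ⬝ᵥ ((D t) *ᵥ x)) + 2 * (star y ⬝ᵥ ((D t) *ᵥ y)) := by
    simp only [star_add, star_sub, Matrix.mulVec_add, Matrix.mulVec_sub,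
      add_dotProduct, sub_dotProduct, dotProduct_add, dotProduct_sub]
    ring
  have key' : qd D t (x + y) + qd D t (x - y) = 2 * qd D t x + 2 * qd D t y := by
    unfold qd
    have := congrArg Complex.re key
    simpa [Complex.add_re, Complex.mul_re] using this
  nlinarith [qd_nonneg hDpos t (x - y)]

lemma qd_sub_le (hDpos : ∀ t, (D t).PosSemidef) (t : Ω) (x y : Fin d → ℂ) :
    qd D t (x - y) ≤ 2 * qd D t x + 2 * qd D t y := by
  have hneg : qd D t (-y) = qd D t y := by
    have : (-y : Fin d → ℂ) = (-1 : ℂ) • y := by funext j; simp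
    rw [this, qd_smul]; simp
  calc qd D t (x - y) = qd D t (x + (-y)) := by rw [sub_eq_add_neg]
    _ ≤ 2 * qd D t x + 2 * qd D t (-y) := qd_add_le hDpos t x (-y)
    _ = 2 * qd D t x + 2 * qd D t y := by rw [hneg]

lemma qd_measurable (hDmeas : ∀ i j, Measurable fun t => D t i j)
    {f : Ω → Fin d → ℂ} (hf : Measurable f) :
    Measurable fun t => qd D t (f t) := by
  apply Complex.measurable_re.comp
  show Measurable fun t => star (f t) ⬝ᵥ ((D t) *ᵥ (f t))
  simp only [dotProduct, Matrix.mulVec, Pi.star_apply]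
  apply Finset.measurable_sum
  intro i _
  apply Measurable.mul
  · exact continuous_star.measurable.comp hf.eval
  · exact Finset.measurable_sum _ fun j _ => ((hDmeas i j).mul hf.eval)

lemma quad_single (t : Ω) (i : Fin d) :
    star (Pi.single i (1:ℂ)) ⬝ᵥ ((D t) *ᵥ (Pi.single i (1:ℂ))) = D t i i := by
  have hs : star (Pi.single i (1:ℂ)) = (Pi.single i (1:ℂ) : Fin d → ℂ) := by
    funext j
    simp only [Pi.star_apply, Pi.single_apply]
    by_cases h : j = i <;> simp [h]
  rw [hs, Matrix.mulVec_single, single_dotProduct]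
  simp

lemma diag_eq_ofReal (hDpos : ∀ t, (D t).PosSemidef) (t : Ω) (i : Fin d) :
    D t i i = (((D t i i).re : ℝ) : ℂ) := by
  have h0 := (hDpos t).dotProduct_mulVec_nonneg (Pi.single i (1:ℂ))
  rw [quad_single] at h0
  apply Complex.ext
  · simp
  · simpa using (Complex.le_def.mp h0).2.symm

lemma diag_re_nonneg (hDpos : ∀ t, (D t).PosSemidef) (t : Ω) (i : Fin d) :
    0 ≤ (D t i i).re := by
  have h0 := (hDpos t).dotProduct_mulVec_nonneg (Pi.single i (1:ℂ))
  rw [quad_single] at h0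
  exact (Complex.le_def.mp h0).1

lemma qd_single (t : Ω) (i : Fin d) : qd D t (Pi.single i (1:ℂ)) = (D t i i).re := by
  unfold qd; rw [quad_single]

variable {μ : Measure Ω} [IsFiniteMeasure μ]

/-- trace identity on measurable sets -/
lemma sum_setIntegral_diag (M : Set Ω → Matrix (Fin d) (Fin d) ℂ)
    (hμ : ∀ ω : Set Ω, MeasurableSet ω → (M ω).trace = ((μ ω).toReal : ℂ))
    (hDpos : ∀ t, (D t).PosSemidef)
    (hden : ∀ ω : Set Ω, MeasurableSet ω → ∀ i j, M ω i j = ∫ t in ω, D t i j ∂μ)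
    {A : Set Ω} (hA : MeasurableSet A) :
    ∑ i : Fin d, ∫ t in A, (D t i i).re ∂μ = (μ A).toReal := by
  have h1 : ((∑ i : Fin d, ∫ t in A, (D t i i).re ∂μ : ℝ) : ℂ) = ((μ A).toReal : ℂ) := by
    rw [← hμ A hA, Matrix.trace]
    push_cast
    apply Finset.sum_congr rfl
    intro i _
    rw [Matrix.diag_apply, hden A hA i i]
    calc (((∫ t in A, (D t i i).re ∂μ : ℝ)) : ℂ)
        = ∫ t in A, (((D t i i).re : ℝ) : ℂ) ∂μ := (integral_ofReal).symm
      _ = ∫ t in A, D t i i ∂μ := by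
          apply integral_congr_ae
          filter_upwards with t using (diag_eq_ofReal hDpos t i).symm
  exact_mod_cast h1

lemma diag_integrable (M : Set Ω → Matrix (Fin d) (Fin d) ℂ)
    (hμ : ∀ ω : Set Ω, MeasurableSet ω → (M ω).trace = ((μ ω).toReal : ℂ))
    (hDmeas : ∀ i j, Measurable fun t => D t i j)
    (hDpos : ∀ t, (D t).PosSemidef)
    (hden : ∀ ω : Set Ω, MeasurableSet ω → ∀ i j, M ω i j = ∫ t in ω, D t i j ∂μ)
    (i : Fin d) : Integrable (fun t => (D t i i).re) μ := by
  set h : Ω → ℝ := fun t => (D t i i).re with hh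
  have hmeas : Measurable h := Complex.measurable_re.comp (hDmeas i i)
  have hnn : ∀ t, 0 ≤ h t := fun t => diag_re_nonneg hDpos t i
  set ω : ℕ → Set Ω := fun n => {t | h t ≤ n} with hω
  have hωmeas : ∀ n, MeasurableSet (ω n) := fun n => hmeas measurableSet_Iic
  set K : ℝ := (μ univ).toReal with hK
  have hint : ∀ n, IntegrableOn h (ω n) μ := by
    intro n
    refine Integrable.mono' (integrable_const (n:ℝ)) (hmeas.aestronglyMeasurable.restrict) ?_
    filter_upwards [ae_restrict_mem (hωmeas n)] with t ht
    rw [Real.norm_eq_abs, abs_of_nonneg (hnn t)]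
    exact ht
  have hbound : ∀ n, ∫ t in ω n, h t ∂μ ≤ K := by
    intro n
    have htr := sum_setIntegral_diag M hμ hDpos hden (hωmeas n)
    have hle : ∫ t in ω n, h t ∂μ ≤ ∑ j : Fin d, ∫ t in ω n, (D t j j).re ∂μ := by
      refine Finset.single_le_sum (f := fun j => ∫ t in ω n, (D t j j).re ∂μ) ?_ (Finset.mem_univ i)
      intro j _
      exact setIntegral_nonneg (hωmeas n) fun t _ => diag_re_nonneg hDpos t j
    calc ∫ t in ω n, h t ∂μ ≤ _ := hle
      _ = (μ (ω n)).toReal := htr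
      _ ≤ K := ENNReal.toReal_mono (measure_ne_top μ _) (measure_mono (subset_univ _))
  have hlim : ∫⁻ t, ENNReal.ofReal (h t) ∂μ ≤ ENNReal.ofReal K := by
    have hmono : Monotone fun n => (ω n).indicator (fun t => ENNReal.ofReal (h t)) := by
      intro n m hnm t
      by_cases ht : t ∈ ω n
      · have ht' : h t ≤ (n:ℝ) := ht
        have htm : t ∈ ω m := show h t ≤ (m:ℝ) from le_trans ht' (Nat.cast_le.mpr hnm)
        simp [indicator_of_mem, ht, htm]
      · simp [indicator_of_notMem, ht]
    have hsup : ∀ t, ⨆ n, (ω n).indicator (fun t => ENNReal.ofReal (h t)) t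
        = ENNReal.ofReal (h t) := by
      intro t
      obtain ⟨n, hn⟩ := exists_nat_ge (h t)
      apply le_antisymm
      · exact iSup_le fun m => indicator_le_self _ _ t
      · have heq : (ω n).indicator (fun t => ENNReal.ofReal (h t)) t
            = ENNReal.ofReal (h t) := indicator_of_mem (show t ∈ ω n from hn) _
        rw [← heq]
        exact le_iSup (fun n => (ω n).indicator (fun t => ENNReal.ofReal (h t)) t) n
    calc ∫⁻ t, ENNReal.ofReal (h t) ∂μ
        = ∫⁻ t, ⨆ n, (ω n).indicator (fun t => ENNReal.ofReal (h t)) t ∂μ := by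
          apply lintegral_congr; intro t; rw [hsup]
      _ = ⨆ n, ∫⁻ t, (ω n).indicator (fun t => ENNReal.ofReal (h t)) t ∂μ := by
          apply lintegral_iSup
          · exact fun n => ((ENNReal.measurable_ofReal.comp hmeas)).indicator (hωmeas n)
          · exact hmono
      _ ≤ ENNReal.ofReal K := by
          apply iSup_le
          intro n
          rw [lintegral_indicator (hωmeas n)]
          rw [← ofReal_integral_eq_lintegral_ofReal (hint n)
            (Filter.Eventually.of_forall fun t => hnn t)]
          exact ENNReal.ofReal_le_ofReal (hbound n)
  refine ⟨hmeas.aestronglyMeasurable, ?_⟩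
  rw [hasFiniteIntegral_iff_norm]
  calc ∫⁻ t, ENNReal.ofReal ‖h t‖ ∂μ = ∫⁻ t, ENNReal.ofReal (h t) ∂μ := by
        apply lintegral_congr; intro t; rw [Real.norm_eq_abs, abs_of_nonneg (hnn t)]
    _ ≤ ENNReal.ofReal K := hlim
    _ < ⊤ := ENNReal.ofReal_lt_top

lemma exists_pos_diag (M : Set Ω → Matrix (Fin d) (Fin d) ℂ)
    (hμ : ∀ ω : Set Ω, MeasurableSet ω → (M ω).trace = ((μ ω).toReal : ℂ))
    (hDpos : ∀ t, (D t).PosSemidef)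
    (hden : ∀ ω : Set Ω, MeasurableSet ω → ∀ i j, M ω i j = ∫ t in ω, D t i j ∂μ)
    {A : Set Ω} (hA : MeasurableSet A) (hA0 : μ A ≠ 0) :
    ∃ i : Fin d, 0 < ∫ t in A, (D t i i).re ∂μ := by
  by_contra hcon
  push_neg at hcon
  have hz : ∀ i : Fin d, ∫ t in A, (D t i i).re ∂μ = 0 := fun i =>
    le_antisymm (hcon i) (setIntegral_nonneg hA fun t _ => diag_re_nonneg hDpos t i)
  have htr : (μ A).toReal = 0 := by
    rw [← sum_setIntegral_diag M hμ hDpos hden hA]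
    exact Finset.sum_eq_zero fun i _ => hz i
  rw [ENNReal.toReal_eq_zero_iff] at htr
  exact hA0 (htr.resolve_right (measure_ne_top μ A))

noncomputable def efun (A : Set Ω) (i : Fin d) : Ω → Fin d → ℂ :=
  fun t => A.indicator (fun _ => Pi.single i (1:ℂ)) t

lemma qd_efun (A : Set Ω) (i : Fin d) (t : Ω) :
    qd D t (efun A i t) = A.indicator (fun s => (D s i i).re) t := by
  by_cases ht : t ∈ A
  · simp only [efun, indicator_of_mem ht, qd_single]
  · simp only [efun, indicator_of_notMem ht, qd_zero]

lemma efun_measurable {A : Set Ω} (hA : MeasurableSet A) (i : Fin d) :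
    Measurable (efun A i) :=
  Measurable.indicator measurable_const hA

lemma smul_efun_facts (M : Set Ω → Matrix (Fin d) (Fin d) ℂ)
    (hμ : ∀ ω : Set Ω, MeasurableSet ω → (M ω).trace = ((μ ω).toReal : ℂ))
    (hDmeas : ∀ i j, Measurable fun t => D t i j)
    (hDpos : ∀ t, (D t).PosSemidef)
    (hden : ∀ ω : Set Ω, MeasurableSet ω → ∀ i j, M ω i j = ∫ t in ω, D t i j ∂μ)
    {A : Set Ω} (hA : MeasurableSet A)
    {c : Ω → ℂ} (hc : Measurable c) {B : ℝ}
    (hB : ∀ t ∈ A, Complex.normSq (c t) ≤ B) (i : Fin d) :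
    MemL2M μ D (fun t => c t • efun A i t) ∧
    quadInt μ D (fun t => c t • efun A i t)
      = ∫ t, A.indicator (fun s => Complex.normSq (c s) * (D s i i).re) t ∂μ ∧
    Integrable (fun t => A.indicator (fun s => Complex.normSq (c s) * (D s i i).re) t) μ := by
  have hpt : ∀ t, qd D t (c t • efun A i t)
      = A.indicator (fun s => Complex.normSq (c s) * (D s i i).re) t := by
    intro t
    rw [qd_smul, qd_efun]
    by_cases ht : t ∈ A
    · rw [indicator_of_mem ht, indicator_of_mem ht]
    · rw [indicator_of_notMem ht, indicator_of_notMem ht, mul_zero]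
  have hm : Measurable (fun t => c t • efun A i t) := by
    rw [measurable_pi_iff]; intro j
    exact hc.mul ((efun_measurable hA i).eval)
  have hind : Integrable (fun t => A.indicator (fun s => Complex.normSq (c s) * (D s i i).re) t) μ := by
    refine Integrable.mono'
      ((diag_integrable M hμ hDmeas hDpos hden i).const_mul (max B 0)) ?_ ?_
    · refine Measurable.aestronglyMeasurable (Measurable.indicator ?_ hA)
      exact (Complex.continuous_normSq.measurable.comp hc).mul
        (Complex.measurable_re.comp (hDmeas i i))
    · filter_upwards with t
      have hd := diag_re_nonneg hDpos t i
      by_cases ht : t ∈ A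
      · rw [indicator_of_mem ht, Real.norm_eq_abs,
          abs_of_nonneg (mul_nonneg (Complex.normSq_nonneg _) hd)]
        have := hB t ht
        nlinarith [le_max_left B (0:ℝ), le_max_right B (0:ℝ)]
      · rw [indicator_of_notMem ht]
        simp only [norm_zero]
        positivity
  refine ⟨⟨hm, ?_⟩, ?_, hind⟩
  · exact hind.congr (Filter.Eventually.of_forall fun t => (hpt t).symm)
  · exact integral_congr_ae (Filter.Eventually.of_forall hpt)

lemma efun_facts (M : Set Ω → Matrix (Fin d) (Fin d) ℂ)
    (hμ : ∀ ω : Set Ω, MeasurableSet ω → (M ω).trace = ((μ ω).toReal : ℂ))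
    (hDmeas : ∀ i j, Measurable fun t => D t i j)
    (hDpos : ∀ t, (D t).PosSemidef)
    (hden : ∀ ω : Set Ω, MeasurableSet ω → ∀ i j, M ω i j = ∫ t in ω, D t i j ∂μ)
    {A : Set Ω} (hA : MeasurableSet A) (i : Fin d) :
    MemL2M μ D (efun A i) ∧
    quadInt μ D (efun A i) = ∫ t in A, (D t i i).re ∂μ := by
  have h1 := smul_efun_facts M hμ hDmeas hDpos hden hA (measurable_const (a := (1:ℂ)))
    (B := 1) (fun t _ => by simp) i
  have he : (fun t => (1:ℂ) • efun A i t) = efun A i := by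
    funext t; rw [one_smul]
  rw [he] at h1
  refine ⟨h1.1, ?_⟩
  rw [h1.2.1, ← integral_indicator hA]
  apply integral_congr_ae
  filter_upwards with t
  by_cases ht : t ∈ A
  · rw [indicator_of_mem ht, indicator_of_mem ht]; simp
  · rw [indicator_of_notMem ht, indicator_of_notMem ht]


lemma preimage_compl_essValueSet_null :
    μ (F ⁻¹' (essValueSet μ F)ᶜ) = 0 := by
  set S : Set (Set ℂ) := {U | IsOpen U ∧ μ (F ⁻¹' U) = 0} with hS
  have hopen : ∀ s ∈ S, IsOpen s := fun s hs => hs.1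
  obtain ⟨T, hTc, hTS, hTU⟩ := TopologicalSpace.isOpen_sUnion_countable S hopen
  have hcompl : (essValueSet μ F)ᶜ = ⋃₀ S := by
    ext z
    simp only [essValueSet, mem_compl_iff, mem_setOf_eq, not_forall, mem_sUnion, hS]
    constructor
    · rintro ⟨U, hU, hz, hnull⟩
      exact ⟨U, ⟨hU, not_not.mp hnull⟩, hz⟩
    · rintro ⟨U, ⟨hU, hnull⟩, hz⟩
      exact ⟨U, hU, hz, not_not.mpr hnull⟩
  rw [hcompl, ← hTU, Set.sUnion_eq_biUnion, Set.preimage_iUnion₂]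
  refine (measure_biUnion_null_iff hTc).mpr ?_
  intro U hU
  exact (hTS hU).2

lemma ae_mem_essValueSet : ∀ᵐ t ∂μ, F t ∈ essValueSet μ F := by
  rw [MeasureTheory.ae_iff]
  have : {t | ¬ F t ∈ essValueSet μ F} = F ⁻¹' (essValueSet μ F)ᶜ := rfl
  rw [this]
  exact preimage_compl_essValueSet_null

lemma quadInt_eq (f : Ω → Fin d → ℂ) :
    quadInt μ D f = ∫ t, qd D t (f t) ∂μ := rfl

lemma quadInt_nonneg (hDpos : ∀ t, (D t).PosSemidef) (f : Ω → Fin d → ℂ) :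
    0 ≤ quadInt μ D f :=
  integral_nonneg fun t => qd_nonneg hDpos t (f t)

lemma normSq_eq_norm_sq (z : ℂ) : Complex.normSq z = ‖z‖ ^ 2 := by
  rw [Complex.normSq_eq_norm_sq]

lemma ae_ge_of_ball_null {F : Ω → ℂ} {lam : ℂ} {ε : ℝ}
    (h : μ (F ⁻¹' Metric.ball lam ε) = 0) : ∀ᵐ t ∂μ, ε ≤ ‖F t - lam‖ := by
  rw [MeasureTheory.ae_iff]
  refine measure_mono_null ?_ h
  intro t ht
  simp only [mem_setOf_eq, not_le] at ht
  simp only [mem_preimage, Metric.mem_ball, Complex.dist_eq]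
  exact ht

/-- operator bound from VE bound -/
lemma opbound_of_ve_bound
    (hDmeas : ∀ i j, Measurable fun t => D t i j)
    (hDpos : ∀ t, (D t).PosSemidef)
    {F : Ω → ℂ} (hF : Measurable F) {C : ℝ} (hC : 0 ≤ C)
    (hve : ∀ lam ∈ essValueSet μ F, ‖lam‖ ≤ C) :
    ∀ f : Ω → Fin d → ℂ, MemL2M μ D f →
      MemL2M μ D (fun t => F t • f t) ∧
      quadInt μ D (fun t => F t • f t) ≤ C ^ 2 * quadInt μ D f := by
  intro f hf
  obtain ⟨hfm, hfi⟩ := hf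
  have hFa : ∀ᵐ t ∂μ, ‖F t‖ ≤ C := ae_mem_essValueSet.mono fun t ht => hve _ ht
  have hm : Measurable (fun t => F t • f t) := by
    rw [measurable_pi_iff]; intro j
    exact hF.mul hfm.eval
  have hpt : ∀ t, qd D t (F t • f t) = Complex.normSq (F t) * qd D t (f t) :=
    fun t => qd_smul t (F t) (f t)
  have hbd : ∀ᵐ t ∂μ, ‖qd D t (F t • f t)‖ ≤ C ^ 2 * qd D t (f t) := by
    filter_upwards [hFa] with t ht
    rw [Real.norm_eq_abs, abs_of_nonneg (qd_nonneg hDpos t _), hpt,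
      normSq_eq_norm_sq]
    have h1 : 0 ≤ qd D t (f t) := qd_nonneg hDpos t _
    have h2 : ‖F t‖ ^ 2 ≤ C ^ 2 := by nlinarith [norm_nonneg (F t)]
    exact mul_le_mul_of_nonneg_right h2 h1
  have hint : Integrable (fun t => qd D t (F t • f t)) μ := by
    refine Integrable.mono' (hfi.const_mul (C ^ 2)) ?_ hbd
    exact (qd_measurable hDmeas hm).aestronglyMeasurable
  refine ⟨⟨hm, hint⟩, ?_⟩
  rw [quadInt_eq, quadInt_eq, ← integral_const_mul]
  refine integral_mono_ae hint (hfi.const_mul _) ?_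
  filter_upwards [hbd] with t ht
  calc qd D t (F t • f t) ≤ ‖qd D t (F t • f t)‖ := le_abs_self _
    _ ≤ C ^ 2 * qd D t (f t) := ht

/-- VE bound from operator bound -/
lemma ve_bound_of_opbound (M : Set Ω → Matrix (Fin d) (Fin d) ℂ)
    (hμ : ∀ ω : Set Ω, MeasurableSet ω → (M ω).trace = ((μ ω).toReal : ℂ))
    (hDmeas : ∀ i j, Measurable fun t => D t i j)
    (hDpos : ∀ t, (D t).PosSemidef)
    (hden : ∀ ω : Set Ω, MeasurableSet ω → ∀ i j, M ω i j = ∫ t in ω, D t i j ∂μ)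
    {F : Ω → ℂ} (hF : Measurable F) {C : ℝ} (hC : 0 ≤ C)
    (hop : ∀ f : Ω → Fin d → ℂ, MemL2M μ D f →
      MemL2M μ D (fun t => F t • f t) ∧
      quadInt μ D (fun t => F t • f t) ≤ C ^ 2 * quadInt μ D f) :
    ∀ lam ∈ essValueSet μ F, ‖lam‖ ≤ C := by
  intro lam hlam
  by_contra hlt
  push_neg at hlt
  set ε : ℝ := (‖lam‖ - C) / 2 with hε
  have hεpos : 0 < ε := by rw [hε]; linarith
  set A : Set Ω := F ⁻¹' Metric.ball lam ε with hAdef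
  have hA : MeasurableSet A := hF measurableSet_ball
  have hA0 : μ A ≠ 0 := hlam _ Metric.isOpen_ball (Metric.mem_ball_self hεpos)
  obtain ⟨i, hq⟩ := exists_pos_diag M hμ hDpos hden hA hA0
  obtain ⟨hmem, hquad⟩ := efun_facts M hμ hDmeas hDpos hden hA i
  obtain ⟨hFfmem, hFfbound⟩ := hop (efun A i) hmem
  set m : ℝ := ‖lam‖ - ε with hmdef
  have hmC : m = C + ε := by rw [hmdef, hε]; ring
  have hm0 : 0 ≤ m := by rw [hmC]; positivity
  have hdist : ∀ t ∈ A, dist (F t) lam < ε := fun t ht => ht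
  have hFlow : ∀ t ∈ A, m ^ 2 ≤ Complex.normSq (F t) := by
    intro t ht
    have hd := hdist t ht
    have h1 : ‖lam‖ - ‖F t‖ ≤ ε := by
      calc ‖lam‖ - ‖F t‖ ≤ ‖lam - F t‖ := norm_sub_norm_le lam (F t)
        _ = dist (F t) lam := by rw [dist_comm, Complex.dist_eq]
        _ ≤ ε := le_of_lt hd
    rw [normSq_eq_norm_sq]
    have h2 : m ≤ ‖F t‖ := by rw [hmdef]; linarith
    nlinarith [norm_nonneg (F t)]
  have hFhigh : ∀ t ∈ A, Complex.normSq (F t) ≤ (‖lam‖ + ε) ^ 2 := by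
    intro t ht
    have hd := hdist t ht
    have h1 : ‖F t‖ - ‖lam‖ ≤ ε := by
      calc ‖F t‖ - ‖lam‖ ≤ ‖F t - lam‖ := norm_sub_norm_le (F t) lam
        _ = dist (F t) lam := by rw [Complex.dist_eq]
        _ ≤ ε := le_of_lt hd
    rw [normSq_eq_norm_sq]
    nlinarith [norm_nonneg (F t), norm_nonneg lam]
  obtain ⟨_, hFquad, hFind⟩ :=
    smul_efun_facts M hμ hDmeas hDpos hden hA hF (B := (‖lam‖ + ε) ^ 2) hFhigh i
  have hlow : m ^ 2 * ∫ t in A, (D t i i).re ∂μ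
      ≤ quadInt μ D (fun t => F t • efun A i t) := by
    rw [hFquad]
    calc m ^ 2 * ∫ t in A, (D t i i).re ∂μ
        = ∫ t, A.indicator (fun s => m ^ 2 * (D s i i).re) t ∂μ := by
          rw [integral_indicator hA, integral_const_mul]
      _ ≤ ∫ t, A.indicator (fun s => Complex.normSq (F s) * (D s i i).re) t ∂μ := by
          refine integral_mono
            (((diag_integrable M hμ hDmeas hDpos hden i).const_mul (m ^ 2)).indicator hA)
            hFind ?_
          intro t
          by_cases ht : t ∈ A
          · rw [indicator_of_mem ht, indicator_of_mem ht]
            exact mul_le_mul_of_nonneg_right (hFlow t ht) (diag_re_nonneg hDpos t i)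
          · rw [indicator_of_notMem ht, indicator_of_notMem ht]
  rw [hquad] at hFfbound
  have := le_trans hlow hFfbound
  rw [hmC] at this
  nlinarith [hq, mul_pos (mul_pos hεpos hεpos) hq,
    mul_nonneg (mul_nonneg hC hεpos.le) hq.le]

/-- part 1, forward: resolvent estimates when `lam ∉ VE`. -/
lemma resolvent_of_not_mem (M : Set Ω → Matrix (Fin d) (Fin d) ℂ)
    (hμ : ∀ ω : Set Ω, MeasurableSet ω → (M ω).trace = ((μ ω).toReal : ℂ))
    (hDmeas : ∀ i j, Measurable fun t => D t i j)
    (hDpos : ∀ t, (D t).PosSemidef)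
    (hden : ∀ ω : Set Ω, MeasurableSet ω → ∀ i j, M ω i j = ∫ t in ω, D t i j ∂μ)
    {F : Ω → ℂ} (hF : Measurable F) {lam : ℂ}
    (hlam : lam ∉ essValueSet μ F) :
    (∃ C : ℝ, 0 ≤ C ∧ ∀ f : Ω → Fin d → ℂ, MemL2M μ D f →
        MemL2M μ D (fun t => (F t - lam) • f t) →
        quadInt μ D f ≤ C * quadInt μ D (fun t => (F t - lam) • f t)) ∧
    (∀ g : Ω → Fin d → ℂ, MemL2M μ D g →
        ∃ f : Ω → Fin d → ℂ, MemL2M μ D f ∧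
          MemL2M μ D (fun t => F t • f t) ∧
          quadInt μ D (fun t => (F t - lam) • f t - g t) = 0) := by
  -- extract an ε-ball with null preimage
  simp only [essValueSet, mem_setOf_eq, not_forall] at hlam
  obtain ⟨U, hU, hzU, hnull⟩ := hlam
  rw [not_not] at hnull
  obtain ⟨ε, hεpos, hball⟩ := Metric.isOpen_iff.mp hU lam hzU
  have hballnull : μ (F ⁻¹' Metric.ball lam ε) = 0 :=
    measure_mono_null (preimage_mono hball) hnull
  have hae : ∀ᵐ t ∂μ, ε ≤ ‖F t - lam‖ := ae_ge_of_ball_null hballnull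
  constructor
  · -- lower bound: quadInt f ≤ ε⁻² quadInt ((F - lam) f)
    refine ⟨ε⁻¹ ^ 2, by positivity, ?_⟩
    intro f hf hg
    obtain ⟨hfm, hfi⟩ := hf
    obtain ⟨hgm, hgi⟩ := hg
    rw [quadInt_eq, quadInt_eq, ← integral_const_mul]
    refine integral_mono_ae hfi (hgi.const_mul _) ?_
    filter_upwards [hae] with t ht
    have hq0 : 0 ≤ qd D t (f t) := qd_nonneg hDpos t _
    have hsm : qd D t ((F t - lam) • f t) = Complex.normSq (F t - lam) * qd D t (f t) :=
      qd_smul t _ _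
    rw [hsm, normSq_eq_norm_sq]
    have hε2 : ε ^ 2 ≤ ‖F t - lam‖ ^ 2 := by nlinarith
    have h3 : ε⁻¹ ^ 2 * ε ^ 2 = 1 := by
      field_simp
    nlinarith [mul_le_mul_of_nonneg_left hε2 (mul_nonneg (by positivity : (0:ℝ) ≤ ε⁻¹ ^ 2) hq0)]
  · -- surjectivity
    intro g hg
    obtain ⟨hgm, hgi⟩ := hg
    set f : Ω → Fin d → ℂ := fun t => (F t - lam)⁻¹ • g t with hfdef
    have hfm : Measurable f := by
      rw [measurable_pi_iff]; intro j
      exact ((hF.sub_const lam).inv).mul hgm.eval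
    have haef : ∀ᵐ t ∂μ, (F t - lam) • f t = g t := by
      filter_upwards [hae] with t ht
      have hne : F t - lam ≠ 0 := by
        intro h0
        rw [h0, norm_zero] at ht
        linarith
      rw [hfdef]
      simp only [smul_smul]
      rw [mul_inv_cancel₀ hne, one_smul]
    have hqf_bd : ∀ᵐ t ∂μ, ‖qd D t (f t)‖ ≤ ε⁻¹ ^ 2 * qd D t (g t) := by
      filter_upwards [hae] with t ht
      have hq0g : 0 ≤ qd D t (g t) := qd_nonneg hDpos t _
      rw [Real.norm_eq_abs, abs_of_nonneg (qd_nonneg hDpos t _), hfdef]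
      have hsm : qd D t ((F t - lam)⁻¹ • g t)
          = Complex.normSq ((F t - lam)⁻¹) * qd D t (g t) := qd_smul t _ _
      rw [hsm, normSq_eq_norm_sq, norm_inv]
      have hεn : 0 < ‖F t - lam‖ := lt_of_lt_of_le hεpos ht
      have h4 : ‖F t - lam‖⁻¹ ≤ ε⁻¹ := inv_anti₀ hεpos ht
      have h5 : 0 ≤ ‖F t - lam‖⁻¹ := by positivity
      have h6 : ‖F t - lam‖⁻¹ ^ 2 ≤ ε⁻¹ ^ 2 := by nlinarith
      exact mul_le_mul_of_nonneg_right h6 hq0g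
    have hqfi : Integrable (fun t => qd D t (f t)) μ := by
      refine Integrable.mono' (hgi.const_mul (ε⁻¹ ^ 2)) ?_ hqf_bd
      exact (qd_measurable hDmeas hfm).aestronglyMeasurable
    have hfmem : MemL2M μ D f := ⟨hfm, hqfi⟩
    refine ⟨f, hfmem, ?_, ?_⟩
    · -- F • f ∈ L²(M)
      have hFm : Measurable (fun t => F t • f t) := by
        rw [measurable_pi_iff]; intro j
        exact hF.mul hfm.eval
      have hbd : ∀ᵐ t ∂μ, ‖qd D t (F t • f t)‖
          ≤ 2 * qd D t (g t) + 2 * Complex.normSq lam * qd D t (f t) := by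
        filter_upwards [haef] with t ht
        have heq : F t • f t = g t + lam • f t := by
          have : F t • f t = (F t - lam) • f t + lam • f t := by
            rw [← add_smul]; ring_nf
          rw [this, ht]
        rw [Real.norm_eq_abs, abs_of_nonneg (qd_nonneg hDpos t _), heq]
        calc qd D t (g t + lam • f t)
            ≤ 2 * qd D t (g t) + 2 * qd D t (lam • f t) := qd_add_le hDpos t _ _
          _ = 2 * qd D t (g t) + 2 * Complex.normSq lam * qd D t (f t) := by
              rw [qd_smul t lam (f t)]; ring
      have hint2 : Integrable (fun t => qd D t (F t • f t)) μ := by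
        refine Integrable.mono' ((hgi.const_mul 2).add
          (hqfi.const_mul (2 * Complex.normSq lam))) ?_ ?_
        · exact (qd_measurable hDmeas hFm).aestronglyMeasurable
        · filter_upwards [hbd] with t ht
          exact ht
      exact ⟨hFm, hint2⟩
    · -- (F - lam) f = g in seminorm
      rw [quadInt_eq]
      apply integral_eq_zero_of_ae
      filter_upwards [haef] with t ht
      have : (F t - lam) • f t - g t = 0 := by rw [ht, sub_self]
      rw [this]
      exact qd_zero t

/-- part 1, backward -/
lemma not_mem_of_bound (M : Set Ω → Matrix (Fin d) (Fin d) ℂ)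
    (hμ : ∀ ω : Set Ω, MeasurableSet ω → (M ω).trace = ((μ ω).toReal : ℂ))
    (hDmeas : ∀ i j, Measurable fun t => D t i j)
    (hDpos : ∀ t, (D t).PosSemidef)
    (hden : ∀ ω : Set Ω, MeasurableSet ω → ∀ i j, M ω i j = ∫ t in ω, D t i j ∂μ)
    {F : Ω → ℂ} (hF : Measurable F) {lam : ℂ} {C : ℝ} (hC : 0 ≤ C)
    (hbdd : ∀ f : Ω → Fin d → ℂ, MemL2M μ D f →
        MemL2M μ D (fun t => (F t - lam) • f t) →
        quadInt μ D f ≤ C * quadInt μ D (fun t => (F t - lam) • f t)) :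
    lam ∉ essValueSet μ F := by
  intro hmem
  set ε : ℝ := min 1 (C + 1)⁻¹ with hε
  have hεpos : 0 < ε := by
    rw [hε]
    apply lt_min one_pos
    positivity
  have hε1 : ε ≤ 1 := min_le_left _ _
  have hεC : ε ≤ (C + 1)⁻¹ := min_le_right _ _
  have hCε : C * ε ^ 2 < 1 := by
    have h1 : C * ε ≤ C * (C + 1)⁻¹ := by nlinarith
    have h2 : C * (C + 1)⁻¹ < 1 := by
      rw [mul_inv_lt_iff₀ (by linarith : (0:ℝ) < C + 1)]
      linarith
    nlinarith
  set A : Set Ω := F ⁻¹' Metric.ball lam ε with hAdef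
  have hA : MeasurableSet A := hF measurableSet_ball
  have hA0 : μ A ≠ 0 := hmem _ Metric.isOpen_ball (Metric.mem_ball_self hεpos)
  obtain ⟨i, hq⟩ := exists_pos_diag M hμ hDpos hden hA hA0
  obtain ⟨hmemf, hquadf⟩ := efun_facts M hμ hDmeas hDpos hden hA i
  have hhigh : ∀ t ∈ A, Complex.normSq (F t - lam) ≤ ε ^ 2 := by
    intro t ht
    have hd : dist (F t) lam < ε := ht
    rw [Complex.dist_eq] at hd
    rw [normSq_eq_norm_sq]
    nlinarith [norm_nonneg (F t - lam)]
  obtain ⟨hmemg, hquadg, hindg⟩ := smul_efun_facts M hμ hDmeas hDpos hden hA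
    (hF.sub_const lam) (B := ε ^ 2) hhigh i
  have hup : quadInt μ D (fun t => (F t - lam) • efun A i t)
      ≤ ε ^ 2 * ∫ t in A, (D t i i).re ∂μ := by
    rw [hquadg]
    calc ∫ t, A.indicator (fun s => Complex.normSq (F s - lam) * (D s i i).re) t ∂μ
        ≤ ∫ t, A.indicator (fun s => ε ^ 2 * (D s i i).re) t ∂μ := by
          refine integral_mono hindg
            (((diag_integrable M hμ hDmeas hDpos hden i).const_mul (ε ^ 2)).indicator hA) ?_
          intro t
          by_cases ht : t ∈ A
          · rw [indicator_of_mem ht, indicator_of_mem ht]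
            exact mul_le_mul_of_nonneg_right (hhigh t ht) (diag_re_nonneg hDpos t i)
          · rw [indicator_of_notMem ht, indicator_of_notMem ht]
      _ = ε ^ 2 * ∫ t in A, (D t i i).re ∂μ := by
          rw [integral_indicator hA, integral_const_mul]
  have hkey := hbdd (efun A i) hmemf hmemg
  rw [hquadf] at hkey
  have hq2 : (∫ t in A, (D t i i).re ∂μ)
      ≤ C * (ε ^ 2 * ∫ t in A, (D t i i).re ∂μ) :=
    le_trans hkey (mul_le_mul_of_nonneg_left hup hC)
  nlinarith [hq]


/-- part 2, forward -/
lemma eigen_of_atom (M : Set Ω → Matrix (Fin d) (Fin d) ℂ)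
    (hμ : ∀ ω : Set Ω, MeasurableSet ω → (M ω).trace = ((μ ω).toReal : ℂ))
    (hDmeas : ∀ i j, Measurable fun t => D t i j)
    (hDpos : ∀ t, (D t).PosSemidef)
    (hden : ∀ ω : Set Ω, MeasurableSet ω → ∀ i j, M ω i j = ∫ t in ω, D t i j ∂μ)
    {F : Ω → ℂ} (hF : Measurable F) {lam : ℂ}
    (h0 : μ (F ⁻¹' {lam}) ≠ 0) :
    ∃ f : Ω → Fin d → ℂ, MemL2M μ D f ∧ quadInt μ D f ≠ 0 ∧
      MemL2M μ D (fun t => F t • f t) ∧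
      quadInt μ D (fun t => (F t - lam) • f t) = 0 := by
  set A : Set Ω := F ⁻¹' {lam} with hAdef
  have hA : MeasurableSet A := hF (measurableSet_singleton lam)
  obtain ⟨i, hq⟩ := exists_pos_diag M hμ hDpos hden hA h0
  obtain ⟨hmemf, hquadf⟩ := efun_facts M hμ hDmeas hDpos hden hA i
  have hFA : ∀ t ∈ A, F t = lam := fun t ht => ht
  refine ⟨efun A i, hmemf, ?_, ?_, ?_⟩
  · rw [hquadf]; exact ne_of_gt hq
  · -- F • f ∈ L²(M)
    have hhigh : ∀ t ∈ A, Complex.normSq (F t) ≤ Complex.normSq lam := by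
      intro t ht; rw [hFA t ht]
    exact (smul_efun_facts M hμ hDmeas hDpos hden hA hF hhigh i).1
  · have hhigh : ∀ t ∈ A, Complex.normSq (F t - lam) ≤ 0 := by
      intro t ht; rw [hFA t ht, sub_self, Complex.normSq_zero]
    obtain ⟨_, hquadg, _⟩ := smul_efun_facts M hμ hDmeas hDpos hden hA
      (hF.sub_const lam) hhigh i
    rw [hquadg]
    apply integral_eq_zero_of_ae
    filter_upwards with t
    by_cases ht : t ∈ A
    · rw [indicator_of_mem ht, hFA t ht, sub_self, Complex.normSq_zero, zero_mul]
      rfl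
    · rw [indicator_of_notMem ht]; rfl

/-- part 2, backward -/
lemma atom_of_eigen
    (hDmeas : ∀ i j, Measurable fun t => D t i j)
    (hDpos : ∀ t, (D t).PosSemidef)
    {F : Ω → ℂ} (hF : Measurable F) {lam : ℂ}
    (h0 : μ (F ⁻¹' {lam}) = 0)
    {f : Ω → Fin d → ℂ} (hf : MemL2M μ D f)
    (hFf : MemL2M μ D (fun t => F t • f t))
    (hz : quadInt μ D (fun t => (F t - lam) • f t) = 0) :
    quadInt μ D f = 0 := by
  obtain ⟨hfm, hfi⟩ := hf
  obtain ⟨hFfm, hFfi⟩ := hFf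
  have hane : ∀ᵐ t ∂μ, F t ≠ lam := by
    rw [MeasureTheory.ae_iff]
    refine measure_mono_null ?_ h0
    intro t ht
    simp only [mem_setOf_eq, not_not] at ht
    exact ht
  have hGm : Measurable (fun t => (F t - lam) • f t) := by
    rw [measurable_pi_iff]; intro j
    exact (hF.sub_const lam).mul hfm.eval
  have hGint : Integrable (fun t => qd D t ((F t - lam) • f t)) μ := by
    refine Integrable.mono' ((hFfi.const_mul 2).add
      (hfi.const_mul (2 * Complex.normSq lam))) ?_ ?_
    · exact (qd_measurable hDmeas hGm).aestronglyMeasurable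
    · filter_upwards with t
      show ‖qd D t ((F t - lam) • f t)‖
          ≤ 2 * qd D t (F t • f t) + 2 * Complex.normSq lam * qd D t (f t)
      rw [Real.norm_eq_abs, abs_of_nonneg (qd_nonneg hDpos t _)]
      have heq : (F t - lam) • f t = F t • f t - lam • f t := by
        rw [← sub_smul]
      rw [heq]
      calc qd D t (F t • f t - lam • f t)
          ≤ 2 * qd D t (F t • f t) + 2 * qd D t (lam • f t) := qd_sub_le hDpos t _ _
        _ = 2 * qd D t (F t • f t) + 2 * Complex.normSq lam * qd D t (f t) := by
            rw [qd_smul t lam (f t)]; ring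
  have hGz : (fun t => qd D t ((F t - lam) • f t)) =ᵐ[μ] 0 := by
    rw [← MeasureTheory.integral_eq_zero_iff_of_nonneg
      (fun t => qd_nonneg hDpos t _) hGint]
    exact hz
  have hfz : (fun t => qd D t (f t)) =ᵐ[μ] 0 := by
    filter_upwards [hGz, hane] with t htz htne
    have h1 : Complex.normSq (F t - lam) * qd D t (f t) = 0 := by
      rw [← qd_smul]; exact htz
    have h2 : Complex.normSq (F t - lam) ≠ 0 :=
      (Complex.normSq_pos.mpr (sub_ne_zero.mpr htne)).ne'
    simpa [h2] using (mul_eq_zero.mp h1).resolve_left h2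
  rw [quadInt_eq]
  exact integral_eq_zero_of_ae hfz


end SpecMul

/-- For a matrix measure `M` with `L²(M) ≠ {0}` (equivalently, trace measure
`μ = tr_M ≠ 0`), the multiplication operator `T_F` on `L²(M)` has:
`σ(T_F) = VE_{tr_M}(F)` — i.e. `λ ∉ VE_{tr_M}(F)` iff `T_F - λ` has a (bounded, everywhere
defined) inverse; point spectrum `σ_p(T_F) = {λ : tr_M(F⁻¹{λ}) ≠ 0}`; `T_F` is bounded iff
`VE_{tr_M}(F)` is bounded, and then `‖T_F‖ = sup {|λ| : λ ∈ VE_{tr_M}(F)}` — expressed by: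
the nonnegative operator bounds `C` for `T_F` are exactly the upper bounds of
`{|λ| : λ ∈ VE_{tr_M}(F)}`. Everything is phrased on representatives modulo the zero
layer (seminorm `quadInt`). -/
theorem spectrum_of_multiplication_operator
    {Ω : Type*} [MeasurableSpace Ω] {d : ℕ}
    (M : Set Ω → Matrix (Fin d) (Fin d) ℂ)
    (μ : Measure Ω) [IsFiniteMeasure μ]
    (D : Ω → Matrix (Fin d) (Fin d) ℂ)
    (hpos : ∀ ω : Set Ω, MeasurableSet ω → (M ω).PosSemidef)
    (hμ : ∀ ω : Set Ω, MeasurableSet ω → (M ω).trace = ((μ ω).toReal : ℂ))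
    (hDmeas : ∀ i j, Measurable fun t => D t i j)
    (hDpos : ∀ t, (D t).PosSemidef)
    (hden : ∀ ω : Set Ω, MeasurableSet ω → ∀ i j, M ω i j = ∫ t in ω, D t i j ∂μ)
    (hne : μ ≠ 0)  -- L²(M) ≠ {0}
    (F : Ω → ℂ) (hF : Measurable F) :
    -- σ(T_F) = VE_{tr_M}(F): λ is in the resolvent set of T_F iff λ ∉ VE_{tr_M}(F)
    (∀ lam : ℂ,
      (lam ∉ essValueSet μ F) ↔
        ((∃ C : ℝ, 0 ≤ C ∧ ∀ f : Ω → Fin d → ℂ, MemL2M μ D f →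
            MemL2M μ D (fun t => (F t - lam) • f t) →
            quadInt μ D f ≤ C * quadInt μ D (fun t => (F t - lam) • f t)) ∧
         (∀ g : Ω → Fin d → ℂ, MemL2M μ D g →
            ∃ f : Ω → Fin d → ℂ, MemL2M μ D f ∧
              MemL2M μ D (fun t => F t • f t) ∧
              quadInt μ D (fun t => (F t - lam) • f t - g t) = 0))) ∧
    -- σ_p(T_F) = {λ : tr_M (F⁻¹{λ}) ≠ 0}
    (∀ lam : ℂ,
      (μ (F ⁻¹' {lam}) ≠ 0) ↔
        ∃ f : Ω → Fin d → ℂ, MemL2M μ D f ∧ quadInt μ D f ≠ 0 ∧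
          MemL2M μ D (fun t => F t • f t) ∧
          quadInt μ D (fun t => (F t - lam) • f t) = 0) ∧
    -- T_F is bounded iff VE_{tr_M}(F) is bounded
    ((∃ C : ℝ, 0 ≤ C ∧ ∀ f : Ω → Fin d → ℂ, MemL2M μ D f →
        MemL2M μ D (fun t => F t • f t) ∧
          quadInt μ D (fun t => F t • f t) ≤ C ^ 2 * quadInt μ D f) ↔
      Bornology.IsBounded (essValueSet μ F)) ∧
    -- ‖T_F‖ = sup |VE_{tr_M}(F)|: C ≥ 0 is an operator bound for T_F iff it bounds |VE|
    (∀ C : ℝ, 0 ≤ C →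
      ((∀ f : Ω → Fin d → ℂ, MemL2M μ D f →
          MemL2M μ D (fun t => F t • f t) ∧
            quadInt μ D (fun t => F t • f t) ≤ C ^ 2 * quadInt μ D f) ↔
        ∀ lam ∈ essValueSet μ F, ‖lam‖ ≤ C)) := by
  classical
  refine ⟨?_, ?_, ?_, ?_⟩
  · intro lam
    constructor
    · intro hlam
      exact SpecMul.resolvent_of_not_mem M hμ hDmeas hDpos hden hF hlam
    · rintro ⟨⟨C, hC0, hbdd⟩, -⟩
      exact SpecMul.not_mem_of_bound M hμ hDmeas hDpos hden hF hC0 hbdd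
  · intro lam
    constructor
    · intro h0
      exact SpecMul.eigen_of_atom M hμ hDmeas hDpos hden hF h0
    · rintro ⟨f, hf, hqne, hFf, hz⟩ h0
      exact hqne (SpecMul.atom_of_eigen hDmeas hDpos hF h0 hf hFf hz)
  · constructor
    · rintro ⟨C, hC0, hop⟩
      have hve := SpecMul.ve_bound_of_opbound M hμ hDmeas hDpos hden hF hC0
        (fun f hf => hop f hf)
      exact (Metric.isBounded_closedBall (x := (0:ℂ)) (r := C)).subset
        fun z hz => mem_closedBall_zero_iff.mpr (hve z hz)
    · intro hbd
      obtain ⟨R, hR⟩ := (Metric.isBounded_iff_subset_closedBall 0).mp hbd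
      refine ⟨max R 0, le_max_right _ _, ?_⟩
      have hve : ∀ lam ∈ essValueSet μ F, ‖lam‖ ≤ max R 0 := fun lam hl =>
        le_trans (mem_closedBall_zero_iff.mp (hR hl)) (le_max_left _ _)
      exact SpecMul.opbound_of_ve_bound hDmeas hDpos hF (le_max_right _ _) hve
  · intro C hC0
    constructor
    · intro hop
      exact SpecMul.ve_bound_of_opbound M hμ hDmeas hDpos hden hF hC0 hop
    · intro hve
      exact SpecMul.opbound_of_ve_bound hDmeas hDpos hF hC0 hve
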